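/- The following equalities of left ideals of B hold: l.ann_B(b_n c_n) = B a_n, l.ann_B(c_n) = B a_n b_n + B c_{n−1}, and l.ann_B(a_0) = l.ann_B(a_0 b_0) = B b_1 + B c_0 (where b_1 = 0 if n = 0 and c_{n−1} = 0 if n = 0, by the stated conventions). -/

import Mathlib

noncomputable section

inductive Gen (n : ℕ) : Type
  | a : Fin (n+1) → Gen n
  | b : Fin (n+1) → Gen n
  | c : Fin (n+1) → Gen n

variable (K : Type) [Field K] (n : ℕ)

/-- The tensor algebra `T(V)` on the span of the generators, i.e. the free algebra. -/
abbrev FA := FreeAlgebra K (Gen n)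

/-- `a_i`, with the convention that out-of-range indices give `0`. -/
def ga (i : ℤ) : FA K n :=
  if h : 0 ≤ i ∧ i ≤ (n : ℤ) then FreeAlgebra.ι K (Gen.a ⟨i.toNat, by omega⟩) else 0

def gb (i : ℤ) : FA K n :=
  if h : 0 ≤ i ∧ i ≤ (n : ℤ) then FreeAlgebra.ι K (Gen.b ⟨i.toNat, by omega⟩) else 0

def gc (i : ℤ) : FA K n :=
  if h : 0 ≤ i ∧ i ≤ (n : ℤ) then FreeAlgebra.ι K (Gen.c ⟨i.toNat, by omega⟩) else 0

/-- The set `R` of defining relations. -/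
def rels : Set (FA K n) :=
  { x | x = ga K n n * gb K n n * gc K n n ∨ x = gc K n 0 * ga K n 0 ∨
      ∃ i : ℕ, i < n ∧
        (x = ga K n i * gb K n i * gc K n i + gc K n (i+1) * ga K n (i+1) * gb K n (i+1) ∨
         x = gb K n (i+1) * gc K n (i+1) * ga K n (i+1) ∨
         x = gc K n i * gc K n (i+1) ∨
         x = gb K n (i+1) * ga K n i) }

/-- The relation whose ring-quotient is `B = T(V)/⟨R⟩`. -/
def BRel (x y : FA K n) : Prop := x ∈ rels K n ∧ y = 0

/-- The algebra `B = T(V)/⟨R⟩`. -/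
abbrev B := RingQuot (BRel K n)

/-- The quotient map `π_B : T(V) → B`. -/
def πB : FA K n →ₐ[K] B K n := RingQuot.mkAlgHom K (BRel K n)

/-- The image of `a_i` in `B` (zero for out-of-range indices). -/
def aB (i : ℤ) : B K n := πB K n (ga K n i)
def bB (i : ℤ) : B K n := πB K n (gb K n i)
def cB (i : ℤ) : B K n := πB K n (gc K n i)

/-- The left annihilator of `x`, as a left ideal of `B`. -/
def lann (x : B K n) : Ideal (B K n) where
  carrier := {w | w * x = 0}
  add_mem' := by
    intro a b ha hb
    simp only [Set.mem_setOf_eq, add_mul] at *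
    rw [ha, hb, add_zero]
  zero_mem' := by simp
  smul_mem' := by
    intro c w hw
    simp only [Set.mem_setOf_eq, smul_eq_mul, mul_assoc] at *
    rw [hw, mul_zero]

end
section Aux

variable (K : Type) [Field K] (n : ℕ)

abbrev MA := MonoidAlgebra K (FreeMonoid (Gen n))

noncomputable def EE : FA K n ≃ₐ[K] MA K n := FreeAlgebra.equivMonoidAlgebraFreeMonoid

noncomputable def PP : MA K n →ₐ[K] B K n := (πB K n).comp (EE K n).symm.toAlgHom

variable {n}

/-- word as element of the monoid algebra -/
noncomputable def wd (l : List (Gen n)) : MA K n := MonoidAlgebra.single (FreeMonoid.ofList l) 1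

variable {K}

theorem wd_mul (l l' : List (Gen n)) : wd K l * wd K l' = wd K (l ++ l') := by
  simp [wd, MonoidAlgebra.single_mul_single]

theorem PP_EE (u : FA K n) : PP K n (EE K n u) = πB K n u := by
  simp [PP]

theorem EE_iota (g : Gen n) : EE K n (FreeAlgebra.ι K g) = wd K [g] := by
  simp [EE, FreeAlgebra.equivMonoidAlgebraFreeMonoid, wd]

theorem ga_nat (i : ℕ) (h : i ≤ n) :
    ga K n (i : ℤ) = FreeAlgebra.ι K (Gen.a ⟨i, by omega⟩) := by
  rw [ga, dif_pos ⟨by positivity, by exact_mod_cast h⟩]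
  congr

theorem gb_nat (i : ℕ) (h : i ≤ n) :
    gb K n (i : ℤ) = FreeAlgebra.ι K (Gen.b ⟨i, by omega⟩) := by
  rw [gb, dif_pos ⟨by positivity, by exact_mod_cast h⟩]
  congr

theorem gc_nat (i : ℕ) (h : i ≤ n) :
    gc K n (i : ℤ) = FreeAlgebra.ι K (Gen.c ⟨i, by omega⟩) := by
  rw [gc, dif_pos ⟨by positivity, by exact_mod_cast h⟩]
  congr

theorem pi_rels {r : FA K n} (hr : r ∈ rels K n) : πB K n r = 0 := by
  have := RingQuot.mkAlgHom_rel (S := K) (s := BRel K n) (x := r) (y := 0) ⟨hr, rfl⟩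
  simpa [πB] using this

end Aux
section Aux2

deriving instance DecidableEq for Gen

variable {K : Type} [Field K] {n : ℕ}

variable (K n) in
/-- If `w` ends with `s`, the image in `B` of the word `w` with `s` removed; else `0`. -/
noncomputable def Gfun (s : List (Gen n)) (w : List (Gen n)) : B K n :=
  if s <:+ w then PP K n (wd K (w.take (w.length - s.length))) else 0

variable (K n) in
noncomputable def G (s : List (Gen n)) : MA K n →ₗ[K] B K n :=
  Finsupp.lift (B K n) K (FreeMonoid (Gen n)) (fun w => Gfun K n s (FreeMonoid.toList w)) ∘ₗ
    (MonoidAlgebra.coeffLinearEquiv K).toLinearMap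

theorem Gfun_append (s u : List (Gen n)) : Gfun K n s (u ++ s) = PP K n (wd K u) := by
  rw [Gfun, if_pos ⟨u, rfl⟩]
  congr 2
  simp

theorem Gfun_not_suffix {s w : List (Gen n)} (h : ¬ s <:+ w) : Gfun K n s w = 0 := by
  rw [Gfun, if_neg h]

theorem G_single (s : List (Gen n)) (w : FreeMonoid (Gen n)) (k : K) :
    G K n s (MonoidAlgebra.single w k) = k • Gfun K n s (FreeMonoid.toList w) := by
  rw [G, LinearMap.comp_apply]
  erw [Finsupp.lift_apply]
  exact Finsupp.sum_single_index (by simp)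

theorem G_wd (s l : List (Gen n)) : G K n s (wd K l) = Gfun K n s l := by
  rw [wd, G_single, one_smul]
  congr

theorem Gfun_pat2 (s0 s1 : Gen n) (x : List (Gen n)) (p q : Gen n) :
    Gfun K n [s0, s1] (x ++ [p, q]) =
      if p = s0 ∧ q = s1 then PP K n (wd K x) else 0 := by
  split
  · next h => rw [h.1, h.2]; exact Gfun_append _ _
  · next h =>
    apply Gfun_not_suffix
    rintro ⟨t, ht⟩
    apply h
    have := congrArg List.reverse ht
    simp at this
    exact ⟨this.2.1.symm, this.1.symm⟩

theorem Gfun_pat1 (s0 : Gen n) (x : List (Gen n)) (p : Gen n) :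
    Gfun K n [s0] (x ++ [p]) = if p = s0 then PP K n (wd K x) else 0 := by
  split
  · next h => rw [h]; exact Gfun_append _ _
  · next h =>
    apply Gfun_not_suffix
    rintro ⟨t, ht⟩
    apply h
    have := congrArg List.reverse ht
    simp at this
    exact this.1.symm

theorem G_mul_suffix (s : List (Gen n)) (f : MA K n) :
    G K n s (f * wd K s) = PP K n f := by
  induction f using MonoidAlgebra.induction with
  | zero => simp
  | single_add w k f _ _ ih =>
    rw [add_mul, map_add, map_add, ih]
    congr 1
    show G K n s (MonoidAlgebra.single w k * wd K s) = PP K n (MonoidAlgebra.single w k)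
    rw [wd, MonoidAlgebra.single_mul_single, mul_one, G_single]
    have : FreeMonoid.toList (w * FreeMonoid.ofList s) = FreeMonoid.toList w ++ s := by simp
    rw [this, Gfun_append]
    have hw : MonoidAlgebra.single w k = k • wd K (FreeMonoid.toList w) := by
      simp [wd]
    rw [hw, map_smul]

end Aux2
section Aux3

variable {K : Type} [Field K] {n : ℕ}

variable (K n) in
noncomputable def JJ : Submodule K (MA K n) :=
  Submodule.span K {z | ∃ r ∈ rels K n, ∃ u v : List (Gen n),
    z = wd K u * EE K n r * wd K v}

theorem JJ_mul_right {z : MA K n} (hz : z ∈ JJ K n) (c : MA K n) : z * c ∈ JJ K n := by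
  induction hz using Submodule.span_induction with
  | mem z hz =>
    obtain ⟨r, hr, u, v, rfl⟩ := hz
    induction c using MonoidAlgebra.induction with
    | zero => simpa using (JJ K n).zero_mem
    | single_add w k f _ _ ih =>
      rw [mul_add]
      refine (JJ K n).add_mem ?_ ih
      have : wd K u * EE K n r * wd K v * MonoidAlgebra.single w k
          = k • (wd K u * EE K n r * wd K (v ++ FreeMonoid.toList w)) := by
        have hw : MonoidAlgebra.single w k = k • wd K (FreeMonoid.toList w) := by simp [wd]
        simp only [hw, smul_mul_assoc, mul_smul_comm, ← wd_mul, mul_assoc]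
      rw [this]
      exact (JJ K n).smul_mem _ (Submodule.subset_span ⟨r, hr, u, _, rfl⟩)
  | zero => simpa using (JJ K n).zero_mem
  | add x y _ _ hx hy => rw [add_mul]; exact (JJ K n).add_mem hx hy
  | smul k x _ hx => rw [smul_mul_assoc]; exact (JJ K n).smul_mem _ hx

theorem JJ_mul_left {z : MA K n} (hz : z ∈ JJ K n) (c : MA K n) : c * z ∈ JJ K n := by
  induction hz using Submodule.span_induction with
  | mem z hz =>
    obtain ⟨r, hr, u, v, rfl⟩ := hz
    induction c using MonoidAlgebra.induction with
    | zero => simpa using (JJ K n).zero_mem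
    | single_add w k f _ _ ih =>
      rw [add_mul]
      refine (JJ K n).add_mem ?_ ih
      have : MonoidAlgebra.single w k * (wd K u * EE K n r * wd K v)
          = k • (wd K (FreeMonoid.toList w ++ u) * EE K n r * wd K v) := by
        have hw : MonoidAlgebra.single w k = k • wd K (FreeMonoid.toList w) := by simp [wd]
        simp only [hw, smul_mul_assoc, mul_smul_comm, ← wd_mul, mul_assoc]
      rw [this]
      exact (JJ K n).smul_mem _ (Submodule.subset_span ⟨r, hr, _, v, rfl⟩)
  | zero => simpa using (JJ K n).zero_mem
  | add x y _ _ hx hy => rw [mul_add]; exact (JJ K n).add_mem hx hy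
  | smul k x _ hx => rw [mul_smul_comm]; exact (JJ K n).smul_mem _ hx

theorem rel_sub_mem {x y : FA K n} (h : RingQuot.Rel (BRel K n) x y) :
    EE K n x - EE K n y ∈ JJ K n := by
  induction h with
  | of h =>
    obtain ⟨hx, rfl⟩ := h
    rw [map_zero, sub_zero]
    refine Submodule.subset_span ⟨_, hx, [], [], ?_⟩
    have h1 : wd K ([] : List (Gen n)) = 1 := by
      simp only [wd, MonoidAlgebra.one_def]
      rfl
    rw [h1, one_mul, mul_one]
  | add_left _ ih => simpa using ih
  | mul_left _ ih =>
    rw [map_mul, map_mul, ← sub_mul]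
    exact JJ_mul_right ih _
  | mul_right _ ih =>
    rw [map_mul, map_mul, ← mul_sub]
    exact JJ_mul_left ih _

theorem ker_piB {z : FA K n} (h : πB K n z = 0) : EE K n z ∈ JJ K n := by
  let F : B K n → (MA K n ⧸ JJ K n) := fun b =>
    Quot.lift (fun a => Submodule.Quotient.mk (EE K n a))
      (fun a b hab => (Submodule.Quotient.eq (JJ K n)).mpr (rel_sub_mem hab)) b.toQuot
  have hmk : ∀ a : FA K n, πB K n a = ⟨Quot.mk _ a⟩ := by
    intro a
    simp only [πB, RingQuot.mkAlgHom_def, RingQuot.mkRingHom_def]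
    rfl
  have h0 : (0 : B K n) = ⟨Quot.mk _ 0⟩ := (RingQuot.zero_quot _).symm
  have := congrArg F (h.symm.trans (hmk z)).symm
  rw [h0] at this
  have hz : Submodule.Quotient.mk (EE K n z) = (Submodule.Quotient.mk (EE K n 0) :
      MA K n ⧸ JJ K n) := this
  rw [map_zero] at hz
  simpa using (Submodule.Quotient.eq (JJ K n)).mp hz

end Aux3
section Aux4

variable {K : Type} [Field K] {n : ℕ}

theorem suffix_of_append {α : Type*} {s v : List α} (h : s.length ≤ v.length)
    {x : List α} (hs : s <:+ x ++ v) : s <:+ v := by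
  rw [← List.reverse_prefix] at hs ⊢
  have h2 : v.reverse <+: (x ++ v).reverse := by
    rw [List.reverse_append]
    exact List.prefix_append _ _
  exact List.prefix_of_prefix_length_le hs h2 (by simpa using h)

theorem G_mul_not_suffix {s v : List (Gen n)} (hns : ¬ s <:+ v)
    (hlen : s.length ≤ v.length) (f : MA K n) : G K n s (f * wd K v) = 0 := by
  induction f using MonoidAlgebra.induction with
  | zero => simp
  | single_add w k f _ _ ih =>
    rw [add_mul, map_add, ih, add_zero]
    show G K n s (MonoidAlgebra.single w k * wd K v) = 0
    rw [wd, MonoidAlgebra.single_mul_single, mul_one, G_single]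
    have ht : FreeMonoid.toList (w * FreeMonoid.ofList v) = FreeMonoid.toList w ++ v := by simp
    rw [ht, Gfun_not_suffix (fun hsuf => hns (suffix_of_append hlen hsuf)), smul_zero]

theorem mem_main (s : List (Gen n)) (I : Ideal (B K n))
    (Hshort : ∀ r ∈ rels K n, ∀ u v : List (Gen n), v.length < s.length →
      G K n s (wd K u * EE K n r * wd K v) ∈ I) :
    ∀ z ∈ JJ K n, G K n s z ∈ I := by
  intro z hz
  induction hz using Submodule.span_induction with
  | mem z hz =>
    obtain ⟨r, hr, u, v, rfl⟩ := hz
    rcases lt_or_ge v.length s.length with hlen | hlen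
    · exact Hshort r hr u v hlen
    by_cases hsuf : s <:+ v
    · obtain ⟨t, rfl⟩ := hsuf
      have : wd K u * EE K n r * wd K (t ++ s) = (wd K u * EE K n r * wd K t) * wd K s := by
        rw [← wd_mul, mul_assoc, mul_assoc, mul_assoc]
      rw [this, G_mul_suffix, map_mul, map_mul, PP_EE, pi_rels hr, mul_zero, zero_mul]
      exact I.zero_mem
    · have : wd K u * EE K n r * wd K v = (wd K u * EE K n r) * wd K v := by
        rw [mul_assoc]
      rw [this, G_mul_not_suffix hsuf hlen]
      exact I.zero_mem
  | zero => simp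
  | add x y _ _ hx hy => rw [map_add]; exact I.add_mem hx hy
  | smul k x _ hx =>
    rw [map_smul, algebra_compatible_smul (B K n) k]
    exact I.smul_mem _ hx

theorem PP_append (x y : List (Gen n)) :
    PP K n (wd K (x ++ y)) = PP K n (wd K x) * PP K n (wd K y) := by
  rw [← wd_mul, map_mul]

theorem PP_one_gen (g : Gen n) : PP K n (wd K [g]) = πB K n (FreeAlgebra.ι K g) := by
  rw [← EE_iota, PP_EE]

end Aux4
section Aux5

variable {K : Type} [Field K] {n : ℕ}

theorem G1_snoc (s0 : Gen n) (x : List (Gen n)) (p : Gen n) :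
    G K n [s0] (wd K x * wd K [p]) = if p = s0 then PP K n (wd K x) else 0 := by
  rw [wd_mul, G_wd, Gfun_pat1]

theorem G2_snoc (s0 s1 : Gen n) (x : List (Gen n)) (p q : Gen n) :
    G K n [s0, s1] (wd K x * wd K [p, q]) =
      if p = s0 ∧ q = s1 then PP K n (wd K x) else 0 := by
  have : wd K x * wd K [p, q] = wd K (x ++ [p, q]) := wd_mul _ _
  rw [this, G_wd, Gfun_pat2]

theorem mem_span_mul (x y : B K n) : x * y ∈ Ideal.span {y} :=
  Submodule.mem_span_singleton.mpr ⟨x, rfl⟩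

theorem ga_zero : ga K n (0 : ℤ) = FreeAlgebra.ι K (Gen.a ⟨0, by omega⟩) := by
  simpa using ga_nat (K := K) (n := n) 0 (Nat.zero_le n)

theorem gc_zero : gc K n (0 : ℤ) = FreeAlgebra.ι K (Gen.c ⟨0, by omega⟩) := by
  simpa using gc_nat (K := K) (n := n) 0 (Nat.zero_le n)

theorem gb_one (h : 1 ≤ n) : gb K n (1 : ℤ) = FreeAlgebra.ι K (Gen.b ⟨1, by omega⟩) := by
  simpa using gb_nat (K := K) (n := n) 1 h

theorem cB_zero_eq : cB K n 0 = πB K n (FreeAlgebra.ι K (Gen.c ⟨0, by omega⟩)) := by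
  rw [cB, gc_zero]

theorem Hshort3 : ∀ r ∈ rels K n, ∀ u v : List (Gen n), v.length < 1 →
    G K n [Gen.a ⟨0, by omega⟩] (wd K u * EE K n r * wd K v) ∈
      Ideal.span {bB K n 1} + Ideal.span {cB K n 0} := by
  intro r hr u v hv
  have hv0 : v = [] := by
    cases v with
    | nil => rfl
    | cons q t => simp at hv
  subst hv0
  have hwnil : wd K ([] : List (Gen n)) = 1 := by
    simp only [wd, MonoidAlgebra.one_def]; rfl
  rw [hwnil, mul_one]
  simp only [rels, Set.mem_setOf_eq] at hr
  rcases hr with rfl | rfl | ⟨i, hi, rfl | rfl | rfl | rfl⟩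
  · -- a_n b_n c_n : ends with c_n ≠ a_0
    rw [ga_nat n le_rfl, gb_nat n le_rfl, gc_nat n le_rfl]
    simp only [map_mul, EE_iota]
    have : wd K u * (wd K [Gen.a ⟨n, by omega⟩] * wd K [Gen.b ⟨n, by omega⟩] *
        wd K [Gen.c ⟨n, by omega⟩]) =
        wd K (u ++ [Gen.a ⟨n, by omega⟩, Gen.b ⟨n, by omega⟩]) * wd K [Gen.c ⟨n, by omega⟩] := by
      simp only [wd_mul, List.append_assoc, List.cons_append, List.nil_append]
    rw [this, G1_snoc, if_neg (by simp)]
    exact zero_mem _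
  · -- c_0 a_0 : ends with a_0, gives prefix ⋅ c_0 ∈ span c_0
    rw [ga_zero, gc_zero]
    simp only [map_mul, EE_iota]
    have : wd K u * (wd K [Gen.c ⟨0, by omega⟩] * wd K [Gen.a ⟨0, by omega⟩]) =
        wd K (u ++ [Gen.c ⟨0, by omega⟩]) * wd K [Gen.a ⟨0, by omega⟩] := by
      simp only [wd_mul, List.append_assoc, List.cons_append, List.nil_append]
    rw [this, G1_snoc, if_pos rfl]
    refine Submodule.mem_sup_right ?_
    rw [PP_append, PP_one_gen, ← cB_zero_eq]
    exact mem_span_mul _ _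
  · -- a_i b_i c_i + c_{i+1} a_{i+1} b_{i+1} : ends c_i / b_{i+1}, never a_0
    have e1 : ((i : ℤ) + 1) = ((i + 1 : ℕ) : ℤ) := by push_cast; ring
    rw [e1, ga_nat i (by omega), gb_nat i (by omega), gc_nat i (by omega),
      ga_nat (i+1) (by omega), gb_nat (i+1) (by omega), gc_nat (i+1) (by omega)]
    simp only [map_add, map_mul, EE_iota, mul_add, add_mul, map_add]
    have h1 : wd K u * (wd K [Gen.a ⟨i, by omega⟩] * wd K [Gen.b ⟨i, by omega⟩] *
        wd K [Gen.c ⟨i, by omega⟩]) =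
        wd K (u ++ [Gen.a ⟨i, by omega⟩, Gen.b ⟨i, by omega⟩]) * wd K [Gen.c ⟨i, by omega⟩] := by
      simp only [wd_mul, List.append_assoc, List.cons_append, List.nil_append]
    have h2 : wd K u * (wd K [Gen.c ⟨i+1, by omega⟩] * wd K [Gen.a ⟨i+1, by omega⟩] *
        wd K [Gen.b ⟨i+1, by omega⟩]) =
        wd K (u ++ [Gen.c ⟨i+1, by omega⟩, Gen.a ⟨i+1, by omega⟩]) *
          wd K [Gen.b ⟨i+1, by omega⟩] := by
      simp only [wd_mul, List.append_assoc, List.cons_append, List.nil_append]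
    rw [h1, h2, G1_snoc, G1_snoc, if_neg (by simp), if_neg (by simp), add_zero]
    exact zero_mem _
  · -- b_{i+1} c_{i+1} a_{i+1} : ends a_{i+1}, i+1 ≠ 0
    have e1 : ((i : ℤ) + 1) = ((i + 1 : ℕ) : ℤ) := by push_cast; ring
    rw [e1, ga_nat (i+1) (by omega), gb_nat (i+1) (by omega), gc_nat (i+1) (by omega)]
    simp only [map_mul, EE_iota]
    have : wd K u * (wd K [Gen.b ⟨i+1, by omega⟩] * wd K [Gen.c ⟨i+1, by omega⟩] *
        wd K [Gen.a ⟨i+1, by omega⟩]) =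
        wd K (u ++ [Gen.b ⟨i+1, by omega⟩, Gen.c ⟨i+1, by omega⟩]) *
          wd K [Gen.a ⟨i+1, by omega⟩] := by
      simp only [wd_mul, List.append_assoc, List.cons_append, List.nil_append]
    rw [this, G1_snoc, if_neg (by simp [Fin.ext_iff])]
    exact zero_mem _
  · -- c_i c_{i+1} : ends c_{i+1} ≠ a_0
    have e1 : ((i : ℤ) + 1) = ((i + 1 : ℕ) : ℤ) := by push_cast; ring
    rw [e1, gc_nat i (by omega), gc_nat (i+1) (by omega)]
    simp only [map_mul, EE_iota]
    have : wd K u * (wd K [Gen.c ⟨i, by omega⟩] * wd K [Gen.c ⟨i+1, by omega⟩]) =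
        wd K (u ++ [Gen.c ⟨i, by omega⟩]) * wd K [Gen.c ⟨i+1, by omega⟩] := by
      simp only [wd_mul, List.append_assoc, List.cons_append, List.nil_append]
    rw [this, G1_snoc, if_neg (by simp)]
    exact zero_mem _
  · -- b_{i+1} a_i : ends a_i; a_i = a_0 iff i = 0, gives prefix ⋅ b_1
    have e1 : ((i : ℤ) + 1) = ((i + 1 : ℕ) : ℤ) := by push_cast; ring
    rw [e1, ga_nat i (by omega), gb_nat (i+1) (by omega)]
    simp only [map_mul, EE_iota]
    have : wd K u * (wd K [Gen.b ⟨i+1, by omega⟩] * wd K [Gen.a ⟨i, by omega⟩]) =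
        wd K (u ++ [Gen.b ⟨i+1, by omega⟩]) * wd K [Gen.a ⟨i, by omega⟩] := by
      simp only [wd_mul, List.append_assoc, List.cons_append, List.nil_append]
    rw [this, G1_snoc]
    split
    · next h =>
      have hi0 : i = 0 := by simpa [Fin.ext_iff] using h
      subst hi0
      refine Submodule.mem_sup_left ?_
      rw [PP_append, PP_one_gen]
      rw [show πB K n (FreeAlgebra.ι K (Gen.b ⟨1, by omega⟩)) = bB K n 1 by
        rw [bB, gb_one (by omega)]]
      exact mem_span_mul _ _
    · exact zero_mem _

end Aux5
section Aux6

variable {K : Type} [Field K] {n : ℕ}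

theorem aBn_eq : πB K n (FreeAlgebra.ι K (Gen.a ⟨n, by omega⟩)) = aB K n (n : ℤ) := by
  rw [aB, ga_nat n le_rfl]

theorem bBn_eq : πB K n (FreeAlgebra.ι K (Gen.b ⟨n, by omega⟩)) = bB K n (n : ℤ) := by
  rw [bB, gb_nat n le_rfl]

/-- reassociation helper: all these goals are equalities between products of `wd`s. -/
theorem wd_shuffle {x y : MA K n} (h : x = y) : x = y := h

theorem Hshort1 : ∀ r ∈ rels K n, ∀ u v : List (Gen n), v.length < 2 →
    G K n [Gen.b ⟨n, by omega⟩, Gen.c ⟨n, by omega⟩] (wd K u * EE K n r * wd K v) ∈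
      Ideal.span {aB K n (n : ℤ)} := by
  intro r hr u v hv
  have hwnil : wd K ([] : List (Gen n)) = 1 := by
    simp only [wd, MonoidAlgebra.one_def]; rfl
  simp only [rels, Set.mem_setOf_eq] at hr
  rcases v with _ | ⟨q, _ | ⟨q2, t⟩⟩
  · -- v = []
    rw [hwnil, mul_one]
    rcases hr with rfl | rfl | ⟨i, hi, rfl | rfl | rfl | rfl⟩
    · rw [ga_nat n le_rfl, gb_nat n le_rfl, gc_nat n le_rfl]
      simp only [map_mul, EE_iota]
      rw [show wd K u * (wd K [Gen.a ⟨n, by omega⟩] * wd K [Gen.b ⟨n, by omega⟩] *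
          wd K [Gen.c ⟨n, by omega⟩]) = wd K (u ++ [Gen.a ⟨n, by omega⟩]) *
          wd K [Gen.b ⟨n, by omega⟩, Gen.c ⟨n, by omega⟩] from by
        simp only [wd_mul, List.append_assoc, List.cons_append, List.nil_append]]
      rw [G2_snoc, if_pos ⟨rfl, rfl⟩, PP_append, PP_one_gen, aBn_eq]
      exact mem_span_mul _ _
    · rw [ga_zero, gc_zero]
      simp only [map_mul, EE_iota]
      rw [show wd K u * (wd K [Gen.c ⟨0, by omega⟩] * wd K [Gen.a ⟨0, by omega⟩]) =
          wd K u * wd K [Gen.c ⟨0, by omega⟩, Gen.a ⟨0, by omega⟩] from by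
        simp only [wd_mul, List.append_assoc, List.cons_append, List.nil_append]]
      rw [G2_snoc, if_neg (by simp)]
      exact zero_mem _
    · have e1 : ((i : ℤ) + 1) = ((i + 1 : ℕ) : ℤ) := by push_cast; ring
      rw [e1, ga_nat i (by omega), gb_nat i (by omega), gc_nat i (by omega),
        ga_nat (i+1) (by omega), gb_nat (i+1) (by omega), gc_nat (i+1) (by omega)]
      simp only [map_add, map_mul, EE_iota, mul_add, add_mul]
      rw [show wd K u * (wd K [Gen.a ⟨i, by omega⟩] * wd K [Gen.b ⟨i, by omega⟩] *
          wd K [Gen.c ⟨i, by omega⟩]) = wd K (u ++ [Gen.a ⟨i, by omega⟩]) *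
          wd K [Gen.b ⟨i, by omega⟩, Gen.c ⟨i, by omega⟩] from by
        simp only [wd_mul, List.append_assoc, List.cons_append, List.nil_append]]
      rw [show wd K u * (wd K [Gen.c ⟨i+1, by omega⟩] * wd K [Gen.a ⟨i+1, by omega⟩] *
          wd K [Gen.b ⟨i+1, by omega⟩]) = wd K (u ++ [Gen.c ⟨i+1, by omega⟩]) *
          wd K [Gen.a ⟨i+1, by omega⟩, Gen.b ⟨i+1, by omega⟩] from by
        simp only [wd_mul, List.append_assoc, List.cons_append, List.nil_append]]
      rw [G2_snoc, G2_snoc, if_neg (by simp [Fin.ext_iff]; omega),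
        if_neg (by simp), add_zero]
      exact zero_mem _
    · have e1 : ((i : ℤ) + 1) = ((i + 1 : ℕ) : ℤ) := by push_cast; ring
      rw [e1, ga_nat (i+1) (by omega), gb_nat (i+1) (by omega), gc_nat (i+1) (by omega)]
      simp only [map_mul, EE_iota]
      rw [show wd K u * (wd K [Gen.b ⟨i+1, by omega⟩] * wd K [Gen.c ⟨i+1, by omega⟩] *
          wd K [Gen.a ⟨i+1, by omega⟩]) = wd K (u ++ [Gen.b ⟨i+1, by omega⟩]) *
          wd K [Gen.c ⟨i+1, by omega⟩, Gen.a ⟨i+1, by omega⟩] from by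
        simp only [wd_mul, List.append_assoc, List.cons_append, List.nil_append]]
      rw [G2_snoc, if_neg (by simp)]
      exact zero_mem _
    · have e1 : ((i : ℤ) + 1) = ((i + 1 : ℕ) : ℤ) := by push_cast; ring
      rw [e1, gc_nat i (by omega), gc_nat (i+1) (by omega)]
      simp only [map_mul, EE_iota]
      rw [show wd K u * (wd K [Gen.c ⟨i, by omega⟩] * wd K [Gen.c ⟨i+1, by omega⟩]) =
          wd K u * wd K [Gen.c ⟨i, by omega⟩, Gen.c ⟨i+1, by omega⟩] from by
        simp only [wd_mul, List.append_assoc, List.cons_append, List.nil_append]]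
      rw [G2_snoc, if_neg (by simp)]
      exact zero_mem _
    · have e1 : ((i : ℤ) + 1) = ((i + 1 : ℕ) : ℤ) := by push_cast; ring
      rw [e1, ga_nat i (by omega), gb_nat (i+1) (by omega)]
      simp only [map_mul, EE_iota]
      rw [show wd K u * (wd K [Gen.b ⟨i+1, by omega⟩] * wd K [Gen.a ⟨i, by omega⟩]) =
          wd K u * wd K [Gen.b ⟨i+1, by omega⟩, Gen.a ⟨i, by omega⟩] from by
        simp only [wd_mul, List.append_assoc, List.cons_append, List.nil_append]]
      rw [G2_snoc, if_neg (by simp)]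
      exact zero_mem _
  · -- v = [q]
    rcases hr with rfl | rfl | ⟨i, hi, rfl | rfl | rfl | rfl⟩
    · rw [ga_nat n le_rfl, gb_nat n le_rfl, gc_nat n le_rfl]
      simp only [map_mul, EE_iota]
      rw [show wd K u * (wd K [Gen.a ⟨n, by omega⟩] * wd K [Gen.b ⟨n, by omega⟩] *
          wd K [Gen.c ⟨n, by omega⟩]) * wd K [q] =
          wd K (u ++ [Gen.a ⟨n, by omega⟩, Gen.b ⟨n, by omega⟩]) *
          wd K [Gen.c ⟨n, by omega⟩, q] from by
        simp only [wd_mul, List.append_assoc, List.cons_append, List.nil_append]]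
      rw [G2_snoc, if_neg (by simp)]
      exact zero_mem _
    · rw [ga_zero, gc_zero]
      simp only [map_mul, EE_iota]
      rw [show wd K u * (wd K [Gen.c ⟨0, by omega⟩] * wd K [Gen.a ⟨0, by omega⟩]) * wd K [q] =
          wd K (u ++ [Gen.c ⟨0, by omega⟩]) * wd K [Gen.a ⟨0, by omega⟩, q] from by
        simp only [wd_mul, List.append_assoc, List.cons_append, List.nil_append]]
      rw [G2_snoc, if_neg (by simp)]
      exact zero_mem _
    · have e1 : ((i : ℤ) + 1) = ((i + 1 : ℕ) : ℤ) := by push_cast; ring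
      rw [e1, ga_nat i (by omega), gb_nat i (by omega), gc_nat i (by omega),
        ga_nat (i+1) (by omega), gb_nat (i+1) (by omega), gc_nat (i+1) (by omega)]
      simp only [map_add, map_mul, EE_iota, mul_add, add_mul]
      rw [show wd K u * (wd K [Gen.a ⟨i, by omega⟩] * wd K [Gen.b ⟨i, by omega⟩] *
          wd K [Gen.c ⟨i, by omega⟩]) * wd K [q] =
          wd K (u ++ [Gen.a ⟨i, by omega⟩]) * wd K [Gen.b ⟨i, by omega⟩, Gen.c ⟨i, by omega⟩] *
            wd K [q] from by
        simp only [wd_mul, List.append_assoc, List.cons_append, List.nil_append]]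
      rw [show wd K (u ++ [Gen.a ⟨i, by omega⟩]) *
            wd K [Gen.b ⟨i, by omega⟩, Gen.c ⟨i, by omega⟩] * wd K [q] =
          wd K (u ++ [Gen.a ⟨i, by omega⟩, Gen.b ⟨i, by omega⟩]) *
            wd K [Gen.c ⟨i, by omega⟩, q] from by
        simp only [wd_mul, List.append_assoc, List.cons_append, List.nil_append]]
      rw [show wd K u * (wd K [Gen.c ⟨i+1, by omega⟩] * wd K [Gen.a ⟨i+1, by omega⟩] *
          wd K [Gen.b ⟨i+1, by omega⟩]) * wd K [q] =
          wd K (u ++ [Gen.c ⟨i+1, by omega⟩, Gen.a ⟨i+1, by omega⟩]) *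
            wd K [Gen.b ⟨i+1, by omega⟩, q] from by
        simp only [wd_mul, List.append_assoc, List.cons_append, List.nil_append]]
      rw [G2_snoc, G2_snoc, if_neg (by simp)]
      rw [zero_add]
      split
      · next h =>
        have hq : q = Gen.c ⟨n, by omega⟩ := h.2
        have hin : i + 1 = n := by
          have := h.1
          simpa [Fin.ext_iff] using this
        subst hin
        rw [show u ++ [Gen.c ⟨i+1, by omega⟩, Gen.a ⟨i+1, by omega⟩] =
          (u ++ [Gen.c ⟨i+1, by omega⟩]) ++ [Gen.a ⟨i+1, by omega⟩] from by simp]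
        rw [PP_append, PP_one_gen, aBn_eq]
        exact mem_span_mul _ _
      · exact zero_mem _
    · have e1 : ((i : ℤ) + 1) = ((i + 1 : ℕ) : ℤ) := by push_cast; ring
      rw [e1, ga_nat (i+1) (by omega), gb_nat (i+1) (by omega), gc_nat (i+1) (by omega)]
      simp only [map_mul, EE_iota]
      rw [show wd K u * (wd K [Gen.b ⟨i+1, by omega⟩] * wd K [Gen.c ⟨i+1, by omega⟩] *
          wd K [Gen.a ⟨i+1, by omega⟩]) * wd K [q] =
          wd K (u ++ [Gen.b ⟨i+1, by omega⟩, Gen.c ⟨i+1, by omega⟩]) *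
            wd K [Gen.a ⟨i+1, by omega⟩, q] from by
        simp only [wd_mul, List.append_assoc, List.cons_append, List.nil_append]]
      rw [G2_snoc, if_neg (by simp)]
      exact zero_mem _
    · have e1 : ((i : ℤ) + 1) = ((i + 1 : ℕ) : ℤ) := by push_cast; ring
      rw [e1, gc_nat i (by omega), gc_nat (i+1) (by omega)]
      simp only [map_mul, EE_iota]
      rw [show wd K u * (wd K [Gen.c ⟨i, by omega⟩] * wd K [Gen.c ⟨i+1, by omega⟩]) * wd K [q] =
          wd K (u ++ [Gen.c ⟨i, by omega⟩]) * wd K [Gen.c ⟨i+1, by omega⟩, q] from by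
        simp only [wd_mul, List.append_assoc, List.cons_append, List.nil_append]]
      rw [G2_snoc, if_neg (by simp)]
      exact zero_mem _
    · have e1 : ((i : ℤ) + 1) = ((i + 1 : ℕ) : ℤ) := by push_cast; ring
      rw [e1, ga_nat i (by omega), gb_nat (i+1) (by omega)]
      simp only [map_mul, EE_iota]
      rw [show wd K u * (wd K [Gen.b ⟨i+1, by omega⟩] * wd K [Gen.a ⟨i, by omega⟩]) * wd K [q] =
          wd K (u ++ [Gen.b ⟨i+1, by omega⟩]) * wd K [Gen.a ⟨i, by omega⟩, q] from by
        simp only [wd_mul, List.append_assoc, List.cons_append, List.nil_append]]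
      rw [G2_snoc, if_neg (by simp)]
      exact zero_mem _
  · exfalso
    simp only [List.length_cons] at hv
    omega

end Aux6
section Aux7

variable {K : Type} [Field K] {n : ℕ}

theorem Hshort2 : ∀ r ∈ rels K n, ∀ u v : List (Gen n), v.length < 1 →
    G K n [Gen.c ⟨n, by omega⟩] (wd K u * EE K n r * wd K v) ∈
      Ideal.span {aB K n (n : ℤ) * bB K n (n : ℤ)} + Ideal.span {cB K n ((n : ℤ) - 1)} := by
  intro r hr u v hv
  have hv0 : v = [] := by
    cases v with
    | nil => rfl
    | cons q t => simp at hv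
  subst hv0
  have hwnil : wd K ([] : List (Gen n)) = 1 := by
    simp only [wd, MonoidAlgebra.one_def]; rfl
  rw [hwnil, mul_one]
  simp only [rels, Set.mem_setOf_eq] at hr
  rcases hr with rfl | rfl | ⟨i, hi, rfl | rfl | rfl | rfl⟩
  · -- a_n b_n c_n : ends c_n, gives prefix ⋅ (a_n b_n)
    rw [ga_nat n le_rfl, gb_nat n le_rfl, gc_nat n le_rfl]
    simp only [map_mul, EE_iota]
    rw [show wd K u * (wd K [Gen.a ⟨n, by omega⟩] * wd K [Gen.b ⟨n, by omega⟩] *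
        wd K [Gen.c ⟨n, by omega⟩]) =
        wd K (u ++ [Gen.a ⟨n, by omega⟩, Gen.b ⟨n, by omega⟩]) * wd K [Gen.c ⟨n, by omega⟩] from by
      simp only [wd_mul, List.append_assoc, List.cons_append, List.nil_append]]
    rw [G1_snoc, if_pos rfl]
    refine Submodule.mem_sup_left ?_
    rw [show u ++ [Gen.a ⟨n, by omega⟩, Gen.b ⟨n, by omega⟩] =
      (u ++ [Gen.a ⟨n, by omega⟩]) ++ [Gen.b ⟨n, by omega⟩] from by simp]
    rw [PP_append, PP_append, PP_one_gen, PP_one_gen, aBn_eq, bBn_eq, mul_assoc]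
    exact mem_span_mul _ _
  · rw [ga_zero, gc_zero]
    simp only [map_mul, EE_iota]
    rw [show wd K u * (wd K [Gen.c ⟨0, by omega⟩] * wd K [Gen.a ⟨0, by omega⟩]) =
        wd K (u ++ [Gen.c ⟨0, by omega⟩]) * wd K [Gen.a ⟨0, by omega⟩] from by
      simp only [wd_mul, List.append_assoc, List.cons_append, List.nil_append]]
    rw [G1_snoc, if_neg (by simp)]
    exact zero_mem _
  · have e1 : ((i : ℤ) + 1) = ((i + 1 : ℕ) : ℤ) := by push_cast; ring
    rw [e1, ga_nat i (by omega), gb_nat i (by omega), gc_nat i (by omega),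
      ga_nat (i+1) (by omega), gb_nat (i+1) (by omega), gc_nat (i+1) (by omega)]
    simp only [map_add, map_mul, EE_iota, mul_add, add_mul]
    rw [show wd K u * (wd K [Gen.a ⟨i, by omega⟩] * wd K [Gen.b ⟨i, by omega⟩] *
        wd K [Gen.c ⟨i, by omega⟩]) =
        wd K (u ++ [Gen.a ⟨i, by omega⟩, Gen.b ⟨i, by omega⟩]) * wd K [Gen.c ⟨i, by omega⟩] from by
      simp only [wd_mul, List.append_assoc, List.cons_append, List.nil_append]]
    rw [show wd K u * (wd K [Gen.c ⟨i+1, by omega⟩] * wd K [Gen.a ⟨i+1, by omega⟩] *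
        wd K [Gen.b ⟨i+1, by omega⟩]) =
        wd K (u ++ [Gen.c ⟨i+1, by omega⟩, Gen.a ⟨i+1, by omega⟩]) *
          wd K [Gen.b ⟨i+1, by omega⟩] from by
      simp only [wd_mul, List.append_assoc, List.cons_append, List.nil_append]]
    rw [G1_snoc, G1_snoc, if_neg (by simp [Fin.ext_iff]; omega), if_neg (by simp), add_zero]
    exact zero_mem _
  · have e1 : ((i : ℤ) + 1) = ((i + 1 : ℕ) : ℤ) := by push_cast; ring
    rw [e1, ga_nat (i+1) (by omega), gb_nat (i+1) (by omega), gc_nat (i+1) (by omega)]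
    simp only [map_mul, EE_iota]
    rw [show wd K u * (wd K [Gen.b ⟨i+1, by omega⟩] * wd K [Gen.c ⟨i+1, by omega⟩] *
        wd K [Gen.a ⟨i+1, by omega⟩]) =
        wd K (u ++ [Gen.b ⟨i+1, by omega⟩, Gen.c ⟨i+1, by omega⟩]) *
          wd K [Gen.a ⟨i+1, by omega⟩] from by
      simp only [wd_mul, List.append_assoc, List.cons_append, List.nil_append]]
    rw [G1_snoc, if_neg (by simp)]
    exact zero_mem _
  · -- c_i c_{i+1} : if i+1 = n, gives prefix ⋅ c_{n-1}
    have e1 : ((i : ℤ) + 1) = ((i + 1 : ℕ) : ℤ) := by push_cast; ring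
    rw [e1, gc_nat i (by omega), gc_nat (i+1) (by omega)]
    simp only [map_mul, EE_iota]
    rw [show wd K u * (wd K [Gen.c ⟨i, by omega⟩] * wd K [Gen.c ⟨i+1, by omega⟩]) =
        wd K (u ++ [Gen.c ⟨i, by omega⟩]) * wd K [Gen.c ⟨i+1, by omega⟩] from by
      simp only [wd_mul, List.append_assoc, List.cons_append, List.nil_append]]
    rw [G1_snoc]
    split
    · next h =>
      have hin : i + 1 = n := by simpa [Fin.ext_iff] using h
      subst hin
      refine Submodule.mem_sup_right ?_
      rw [PP_append, PP_one_gen]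
      rw [show πB K (i+1) (FreeAlgebra.ι K (Gen.c ⟨i, by omega⟩)) =
          cB K (i+1) (((i+1 : ℕ) : ℤ) - 1) from by
        rw [cB, show (((i+1 : ℕ) : ℤ) - 1) = ((i : ℕ) : ℤ) from by push_cast; ring,
          gc_nat i (by omega)]]
      exact mem_span_mul _ _
    · exact zero_mem _
  · have e1 : ((i : ℤ) + 1) = ((i + 1 : ℕ) : ℤ) := by push_cast; ring
    rw [e1, ga_nat i (by omega), gb_nat (i+1) (by omega)]
    simp only [map_mul, EE_iota]
    rw [show wd K u * (wd K [Gen.b ⟨i+1, by omega⟩] * wd K [Gen.a ⟨i, by omega⟩]) =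
        wd K (u ++ [Gen.b ⟨i+1, by omega⟩]) * wd K [Gen.a ⟨i, by omega⟩] from by
      simp only [wd_mul, List.append_assoc, List.cons_append, List.nil_append]]
    rw [G1_snoc, if_neg (by simp)]
    exact zero_mem _

theorem Hshort4 : ∀ r ∈ rels K n, ∀ u v : List (Gen n), v.length < 2 →
    G K n [Gen.a ⟨0, by omega⟩, Gen.b ⟨0, by omega⟩] (wd K u * EE K n r * wd K v) ∈
      Ideal.span {bB K n 1} + Ideal.span {cB K n 0} := by
  intro r hr u v hv
  have hwnil : wd K ([] : List (Gen n)) = 1 := by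
    simp only [wd, MonoidAlgebra.one_def]; rfl
  simp only [rels, Set.mem_setOf_eq] at hr
  rcases v with _ | ⟨q, _ | ⟨q2, t⟩⟩
  · -- v = [] : no relation ends with a_0 b_0
    rw [hwnil, mul_one]
    rcases hr with rfl | rfl | ⟨i, hi, rfl | rfl | rfl | rfl⟩
    · rw [ga_nat n le_rfl, gb_nat n le_rfl, gc_nat n le_rfl]
      simp only [map_mul, EE_iota]
      rw [show wd K u * (wd K [Gen.a ⟨n, by omega⟩] * wd K [Gen.b ⟨n, by omega⟩] *
          wd K [Gen.c ⟨n, by omega⟩]) = wd K (u ++ [Gen.a ⟨n, by omega⟩]) *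
          wd K [Gen.b ⟨n, by omega⟩, Gen.c ⟨n, by omega⟩] from by
        simp only [wd_mul, List.append_assoc, List.cons_append, List.nil_append]]
      rw [G2_snoc, if_neg (by simp)]
      exact zero_mem _
    · rw [ga_zero, gc_zero]
      simp only [map_mul, EE_iota]
      rw [show wd K u * (wd K [Gen.c ⟨0, by omega⟩] * wd K [Gen.a ⟨0, by omega⟩]) =
          wd K u * wd K [Gen.c ⟨0, by omega⟩, Gen.a ⟨0, by omega⟩] from by
        simp only [wd_mul, List.append_assoc, List.cons_append, List.nil_append]]
      rw [G2_snoc, if_neg (by simp)]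
      exact zero_mem _
    · have e1 : ((i : ℤ) + 1) = ((i + 1 : ℕ) : ℤ) := by push_cast; ring
      rw [e1, ga_nat i (by omega), gb_nat i (by omega), gc_nat i (by omega),
        ga_nat (i+1) (by omega), gb_nat (i+1) (by omega), gc_nat (i+1) (by omega)]
      simp only [map_add, map_mul, EE_iota, mul_add, add_mul]
      rw [show wd K u * (wd K [Gen.a ⟨i, by omega⟩] * wd K [Gen.b ⟨i, by omega⟩] *
          wd K [Gen.c ⟨i, by omega⟩]) = wd K (u ++ [Gen.a ⟨i, by omega⟩]) *
          wd K [Gen.b ⟨i, by omega⟩, Gen.c ⟨i, by omega⟩] from by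
        simp only [wd_mul, List.append_assoc, List.cons_append, List.nil_append]]
      rw [show wd K u * (wd K [Gen.c ⟨i+1, by omega⟩] * wd K [Gen.a ⟨i+1, by omega⟩] *
          wd K [Gen.b ⟨i+1, by omega⟩]) = wd K (u ++ [Gen.c ⟨i+1, by omega⟩]) *
          wd K [Gen.a ⟨i+1, by omega⟩, Gen.b ⟨i+1, by omega⟩] from by
        simp only [wd_mul, List.append_assoc, List.cons_append, List.nil_append]]
      rw [G2_snoc, G2_snoc, if_neg (by simp), if_neg (by simp [Fin.ext_iff]), add_zero]
      exact zero_mem _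
    · have e1 : ((i : ℤ) + 1) = ((i + 1 : ℕ) : ℤ) := by push_cast; ring
      rw [e1, ga_nat (i+1) (by omega), gb_nat (i+1) (by omega), gc_nat (i+1) (by omega)]
      simp only [map_mul, EE_iota]
      rw [show wd K u * (wd K [Gen.b ⟨i+1, by omega⟩] * wd K [Gen.c ⟨i+1, by omega⟩] *
          wd K [Gen.a ⟨i+1, by omega⟩]) = wd K (u ++ [Gen.b ⟨i+1, by omega⟩]) *
          wd K [Gen.c ⟨i+1, by omega⟩, Gen.a ⟨i+1, by omega⟩] from by
        simp only [wd_mul, List.append_assoc, List.cons_append, List.nil_append]]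
      rw [G2_snoc, if_neg (by simp)]
      exact zero_mem _
    · have e1 : ((i : ℤ) + 1) = ((i + 1 : ℕ) : ℤ) := by push_cast; ring
      rw [e1, gc_nat i (by omega), gc_nat (i+1) (by omega)]
      simp only [map_mul, EE_iota]
      rw [show wd K u * (wd K [Gen.c ⟨i, by omega⟩] * wd K [Gen.c ⟨i+1, by omega⟩]) =
          wd K u * wd K [Gen.c ⟨i, by omega⟩, Gen.c ⟨i+1, by omega⟩] from by
        simp only [wd_mul, List.append_assoc, List.cons_append, List.nil_append]]
      rw [G2_snoc, if_neg (by simp)]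
      exact zero_mem _
    · have e1 : ((i : ℤ) + 1) = ((i + 1 : ℕ) : ℤ) := by push_cast; ring
      rw [e1, ga_nat i (by omega), gb_nat (i+1) (by omega)]
      simp only [map_mul, EE_iota]
      rw [show wd K u * (wd K [Gen.b ⟨i+1, by omega⟩] * wd K [Gen.a ⟨i, by omega⟩]) =
          wd K u * wd K [Gen.b ⟨i+1, by omega⟩, Gen.a ⟨i, by omega⟩] from by
        simp only [wd_mul, List.append_assoc, List.cons_append, List.nil_append]]
      rw [G2_snoc, if_neg (by simp)]
      exact zero_mem _
  · -- v = [q]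
    rcases hr with rfl | rfl | ⟨i, hi, rfl | rfl | rfl | rfl⟩
    · rw [ga_nat n le_rfl, gb_nat n le_rfl, gc_nat n le_rfl]
      simp only [map_mul, EE_iota]
      rw [show wd K u * (wd K [Gen.a ⟨n, by omega⟩] * wd K [Gen.b ⟨n, by omega⟩] *
          wd K [Gen.c ⟨n, by omega⟩]) * wd K [q] =
          wd K (u ++ [Gen.a ⟨n, by omega⟩, Gen.b ⟨n, by omega⟩]) *
          wd K [Gen.c ⟨n, by omega⟩, q] from by
        simp only [wd_mul, List.append_assoc, List.cons_append, List.nil_append]]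
      rw [G2_snoc, if_neg (by simp)]
      exact zero_mem _
    · -- c_0 a_0 then q : ends (a_0, q), gives prefix ⋅ c_0 if q = b_0
      rw [ga_zero, gc_zero]
      simp only [map_mul, EE_iota]
      rw [show wd K u * (wd K [Gen.c ⟨0, by omega⟩] * wd K [Gen.a ⟨0, by omega⟩]) * wd K [q] =
          wd K (u ++ [Gen.c ⟨0, by omega⟩]) * wd K [Gen.a ⟨0, by omega⟩, q] from by
        simp only [wd_mul, List.append_assoc, List.cons_append, List.nil_append]]
      rw [G2_snoc]
      split
      · next h =>
        refine Submodule.mem_sup_right ?_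
        rw [PP_append, PP_one_gen, ← cB_zero_eq]
        exact mem_span_mul _ _
      · exact zero_mem _
    · have e1 : ((i : ℤ) + 1) = ((i + 1 : ℕ) : ℤ) := by push_cast; ring
      rw [e1, ga_nat i (by omega), gb_nat i (by omega), gc_nat i (by omega),
        ga_nat (i+1) (by omega), gb_nat (i+1) (by omega), gc_nat (i+1) (by omega)]
      simp only [map_add, map_mul, EE_iota, mul_add, add_mul]
      rw [show wd K u * (wd K [Gen.a ⟨i, by omega⟩] * wd K [Gen.b ⟨i, by omega⟩] *
          wd K [Gen.c ⟨i, by omega⟩]) * wd K [q] =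
          wd K (u ++ [Gen.a ⟨i, by omega⟩, Gen.b ⟨i, by omega⟩]) *
            wd K [Gen.c ⟨i, by omega⟩, q] from by
        simp only [wd_mul, List.append_assoc, List.cons_append, List.nil_append]]
      rw [show wd K u * (wd K [Gen.c ⟨i+1, by omega⟩] * wd K [Gen.a ⟨i+1, by omega⟩] *
          wd K [Gen.b ⟨i+1, by omega⟩]) * wd K [q] =
          wd K (u ++ [Gen.c ⟨i+1, by omega⟩, Gen.a ⟨i+1, by omega⟩]) *
            wd K [Gen.b ⟨i+1, by omega⟩, q] from by
        simp only [wd_mul, List.append_assoc, List.cons_append, List.nil_append]]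
      rw [G2_snoc, G2_snoc, if_neg (by simp), if_neg (by simp), add_zero]
      exact zero_mem _
    · -- b c a then q : ends (a_{i+1}, q), a_{i+1} ≠ a_0
      have e1 : ((i : ℤ) + 1) = ((i + 1 : ℕ) : ℤ) := by push_cast; ring
      rw [e1, ga_nat (i+1) (by omega), gb_nat (i+1) (by omega), gc_nat (i+1) (by omega)]
      simp only [map_mul, EE_iota]
      rw [show wd K u * (wd K [Gen.b ⟨i+1, by omega⟩] * wd K [Gen.c ⟨i+1, by omega⟩] *
          wd K [Gen.a ⟨i+1, by omega⟩]) * wd K [q] =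
          wd K (u ++ [Gen.b ⟨i+1, by omega⟩, Gen.c ⟨i+1, by omega⟩]) *
            wd K [Gen.a ⟨i+1, by omega⟩, q] from by
        simp only [wd_mul, List.append_assoc, List.cons_append, List.nil_append]]
      rw [G2_snoc, if_neg (by simp [Fin.ext_iff])]
      exact zero_mem _
    · have e1 : ((i : ℤ) + 1) = ((i + 1 : ℕ) : ℤ) := by push_cast; ring
      rw [e1, gc_nat i (by omega), gc_nat (i+1) (by omega)]
      simp only [map_mul, EE_iota]
      rw [show wd K u * (wd K [Gen.c ⟨i, by omega⟩] * wd K [Gen.c ⟨i+1, by omega⟩]) * wd K [q] =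
          wd K (u ++ [Gen.c ⟨i, by omega⟩]) * wd K [Gen.c ⟨i+1, by omega⟩, q] from by
        simp only [wd_mul, List.append_assoc, List.cons_append, List.nil_append]]
      rw [G2_snoc, if_neg (by simp)]
      exact zero_mem _
    · -- b_{i+1} a_i then q : ends (a_i, q), gives prefix ⋅ b_1 if i = 0, q = b_0
      have e1 : ((i : ℤ) + 1) = ((i + 1 : ℕ) : ℤ) := by push_cast; ring
      rw [e1, ga_nat i (by omega), gb_nat (i+1) (by omega)]
      simp only [map_mul, EE_iota]
      rw [show wd K u * (wd K [Gen.b ⟨i+1, by omega⟩] * wd K [Gen.a ⟨i, by omega⟩]) * wd K [q] =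
          wd K (u ++ [Gen.b ⟨i+1, by omega⟩]) * wd K [Gen.a ⟨i, by omega⟩, q] from by
        simp only [wd_mul, List.append_assoc, List.cons_append, List.nil_append]]
      rw [G2_snoc]
      split
      · next h =>
        have hi0 : i = 0 := by simpa [Fin.ext_iff] using h.1
        subst hi0
        refine Submodule.mem_sup_left ?_
        rw [PP_append, PP_one_gen]
        rw [show πB K n (FreeAlgebra.ι K (Gen.b ⟨0+1, by omega⟩)) = bB K n 1 from by
          rw [bB, gb_one (by omega)]]
        exact mem_span_mul _ _
      · exact zero_mem _
  · exfalso
    simp only [List.length_cons] at hv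
    omega

end Aux7
section Aux8

variable {K : Type} [Field K] {n : ℕ}

theorem gb_zero : gb K n (0 : ℤ) = FreeAlgebra.ι K (Gen.b ⟨0, by omega⟩) := by
  simpa using gb_nat (K := K) (n := n) 0 (Nat.zero_le n)

theorem span_le_lann {g x : B K n} (h : g * x = 0) : Ideal.span {g} ≤ lann K n x := by
  rw [Ideal.span_le, Set.singleton_subset_iff]
  exact h

-- easy zero products
theorem zero1 : aB K n (n : ℤ) * (bB K n (n : ℤ) * cB K n (n : ℤ)) = 0 := by
  rw [aB, bB, cB, ← map_mul, ← map_mul, ← mul_assoc]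
  exact pi_rels (Or.inl rfl)

theorem zero2a : aB K n (n : ℤ) * bB K n (n : ℤ) * cB K n (n : ℤ) = 0 := by
  rw [mul_assoc]; exact zero1

theorem zero2b : cB K n ((n : ℤ) - 1) * cB K n (n : ℤ) = 0 := by
  rcases Nat.eq_zero_or_pos n with h | h
  · subst h
    have : gc K 0 ((0 : ℕ) - 1 : ℤ) = 0 := by
      rw [gc, dif_neg (by norm_num)]
    rw [cB, this, map_zero, zero_mul]
  · have e1 : ((n : ℤ) - 1) = ((n - 1 : ℕ) : ℤ) := by omega
    have e2 : (n : ℤ) = (((n - 1) + 1 : ℕ) : ℤ) := by omega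
    have e3 : ((n - 1 : ℕ) : ℤ) + 1 = (((n-1) + 1 : ℕ) : ℤ) := by push_cast; ring
    rw [cB, cB, e1, e2, ← map_mul]
    apply pi_rels
    refine Or.inr (Or.inr ⟨n - 1, by omega, Or.inr (Or.inr (Or.inl ?_))⟩)
    rw [e3]

theorem zero3a : bB K n 1 * aB K n 0 = 0 := by
  rcases Nat.eq_zero_or_pos n with h | h
  · subst h
    have : gb K 0 (1 : ℤ) = 0 := by
      rw [gb, dif_neg (by norm_num)]
    rw [bB, this, map_zero, zero_mul]
  · have e1 : (1 : ℤ) = ((0 : ℕ) : ℤ) + 1 := by norm_num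
    have e0 : (0 : ℤ) = ((0 : ℕ) : ℤ) := by norm_num
    rw [bB, aB, ← map_mul, e1, e0]
    exact pi_rels (Or.inr (Or.inr ⟨0, by omega, Or.inr (Or.inr (Or.inr rfl))⟩))

theorem zero3b : cB K n 0 * aB K n 0 = 0 := by
  rw [cB, aB, ← map_mul]
  exact pi_rels (Or.inr (Or.inl rfl))

theorem stmt1 : lann K n (bB K n (n : ℤ) * cB K n (n : ℤ)) = Ideal.span {aB K n (n : ℤ)} := by
  apply le_antisymm
  · intro w hw
    obtain ⟨u, rfl⟩ := RingQuot.mkAlgHom_surjective K (BRel K n) w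
    have hw' : πB K n u * (bB K n (n : ℤ) * cB K n (n : ℤ)) = 0 := hw
    have h0 : πB K n (u * (gb K n (n : ℤ) * gc K n (n : ℤ))) = 0 := by
      rw [map_mul, map_mul]; exact hw'
    have hJ := ker_piB h0
    have hE : EE K n (u * (gb K n (n : ℤ) * gc K n (n : ℤ))) =
        EE K n u * wd K [Gen.b ⟨n, by omega⟩, Gen.c ⟨n, by omega⟩] := by
      rw [map_mul, map_mul, gb_nat n le_rfl, gc_nat n le_rfl, EE_iota, EE_iota, wd_mul]
      rfl
    rw [hE] at hJ
    have : (πB K n u : B K n) =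
        G K n [Gen.b ⟨n, by omega⟩, Gen.c ⟨n, by omega⟩]
          (EE K n u * wd K [Gen.b ⟨n, by omega⟩, Gen.c ⟨n, by omega⟩]) := by
      rw [G_mul_suffix, PP_EE]
    rw [show (RingQuot.mkAlgHom K (BRel K n)) u = πB K n u from rfl, this]
    exact mem_main _ _ Hshort1 _ hJ
  · exact span_le_lann zero1

theorem stmt2 : lann K n (cB K n (n : ℤ)) =
    Ideal.span {aB K n (n : ℤ) * bB K n (n : ℤ)} + Ideal.span {cB K n ((n : ℤ) - 1)} := by
  apply le_antisymm
  · intro w hw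
    obtain ⟨u, rfl⟩ := RingQuot.mkAlgHom_surjective K (BRel K n) w
    have hw' : πB K n u * cB K n (n : ℤ) = 0 := hw
    have h0 : πB K n (u * gc K n (n : ℤ)) = 0 := by
      rw [map_mul]; exact hw'
    have hJ := ker_piB h0
    have hE : EE K n (u * gc K n (n : ℤ)) = EE K n u * wd K [Gen.c ⟨n, by omega⟩] := by
      rw [map_mul, gc_nat n le_rfl, EE_iota]
    rw [hE] at hJ
    have : (πB K n u : B K n) =
        G K n [Gen.c ⟨n, by omega⟩] (EE K n u * wd K [Gen.c ⟨n, by omega⟩]) := by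
      rw [G_mul_suffix, PP_EE]
    rw [show (RingQuot.mkAlgHom K (BRel K n)) u = πB K n u from rfl, this]
    exact mem_main _ _ Hshort2 _ hJ
  · exact sup_le (span_le_lann zero2a) (span_le_lann zero2b)

theorem stmt3 : lann K n (aB K n 0) = Ideal.span {bB K n 1} + Ideal.span {cB K n 0} := by
  apply le_antisymm
  · intro w hw
    obtain ⟨u, rfl⟩ := RingQuot.mkAlgHom_surjective K (BRel K n) w
    have hw' : πB K n u * aB K n 0 = 0 := hw
    have h0 : πB K n (u * ga K n 0) = 0 := by
      rw [map_mul]; exact hw'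
    have hJ := ker_piB h0
    have hE : EE K n (u * ga K n 0) = EE K n u * wd K [Gen.a ⟨0, by omega⟩] := by
      rw [map_mul, ga_zero, EE_iota]
    rw [hE] at hJ
    have : (πB K n u : B K n) =
        G K n [Gen.a ⟨0, by omega⟩] (EE K n u * wd K [Gen.a ⟨0, by omega⟩]) := by
      rw [G_mul_suffix, PP_EE]
    rw [show (RingQuot.mkAlgHom K (BRel K n)) u = πB K n u from rfl, this]
    exact mem_main _ _ Hshort3 _ hJ
  · exact sup_le (span_le_lann zero3a) (span_le_lann zero3b)

theorem stmt4' : lann K n (aB K n 0 * bB K n 0) =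
    Ideal.span {bB K n 1} + Ideal.span {cB K n 0} := by
  apply le_antisymm
  · intro w hw
    obtain ⟨u, rfl⟩ := RingQuot.mkAlgHom_surjective K (BRel K n) w
    have hw' : πB K n u * (aB K n 0 * bB K n 0) = 0 := hw
    have h0 : πB K n (u * (ga K n 0 * gb K n 0)) = 0 := by
      rw [map_mul, map_mul]; exact hw'
    have hJ := ker_piB h0
    have hE : EE K n (u * (ga K n 0 * gb K n 0)) =
        EE K n u * wd K [Gen.a ⟨0, by omega⟩, Gen.b ⟨0, by omega⟩] := by
      rw [map_mul, map_mul, ga_zero, gb_zero, EE_iota, EE_iota, wd_mul]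
      rfl
    rw [hE] at hJ
    have : (πB K n u : B K n) =
        G K n [Gen.a ⟨0, by omega⟩, Gen.b ⟨0, by omega⟩]
          (EE K n u * wd K [Gen.a ⟨0, by omega⟩, Gen.b ⟨0, by omega⟩]) := by
      rw [G_mul_suffix, PP_EE]
    rw [show (RingQuot.mkAlgHom K (BRel K n)) u = πB K n u from rfl, this]
    exact mem_main _ _ Hshort4 _ hJ
  · refine sup_le (span_le_lann ?_) (span_le_lann ?_)
    · rw [← mul_assoc, zero3a, zero_mul]
    · rw [← mul_assoc, zero3b, zero_mul]

end Aux8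

/-- left annihilators of `b_n c_n`, `c_n`, `a_0`, and `a_0 b_0`. -/
theorem stmt_4 (K : Type) [Field K] (n : ℕ) :
    lann K n (bB K n n * cB K n n) = Ideal.span {aB K n n} ∧
    lann K n (cB K n n) =
      Ideal.span {aB K n n * bB K n n} + Ideal.span {cB K n ((n : ℤ) - 1)} ∧
    lann K n (aB K n 0) = Ideal.span {bB K n 1} + Ideal.span {cB K n 0} ∧
    lann K n (aB K n 0 * bB K n 0) = Ideal.span {bB K n 1} + Ideal.span {cB K n 0} := by
  exact ⟨stmt1, stmt2, stmt3, stmt4'⟩
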